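/- Let $q, Q$ be reals with $q,Q \notin \{0,1,-1\}$ and $q \neq Q$, and $n \ge 2$. If there is a nonzero real $r$ such that $r\cdot\{0,1,q,\ldots,q^{n-1}\} = \{0,1,Q,\ldots,Q^{n-1}\}$ as sets, then $Q = -q$ or $Q = q^{-1}$ or $Q = -q^{-1}$. -/
import Mathlib


/-- If a scale by `r ≠ 0` maps the node set `{0,1,q,…,q^{n-1}}` of `ₑD_n` onto the node
set `{0,1,Q,…,Q^{n-1}}`, then `Q = -q` or `Q = q⁻¹` or `Q = -q⁻¹`. -/
theorem stmt_9 (q Q : ℝ) (hq0 : q ≠ 0) (hq1 : q ≠ 1) (hqm1 : q ≠ -1)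
    (hQ0 : Q ≠ 0) (hQ1 : Q ≠ 1) (hQm1 : Q ≠ -1) (hqQ : q ≠ Q)
    (n : ℕ) (hn : 2 ≤ n) (r : ℝ) (hr : r ≠ 0)
    (h : (fun y => r * y) '' (insert (0 : ℝ) (Set.range fun i : Fin n => q ^ (i : ℕ)))
        = insert (0 : ℝ) (Set.range fun i : Fin n => Q ^ (i : ℕ))) :
    Q = -q ∨ Q = q⁻¹ ∨ Q = -q⁻¹ := by
  have hlq : Real.log q ≠ 0 := by
    intro h0
    rcases Real.log_eq_zero.mp h0 with h' | h' | h' <;> [exact hq0 h'; exact hq1 h'; exact hqm1 h']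
  have hlQ : Real.log Q ≠ 0 := by
    intro h0
    rcases Real.log_eq_zero.mp h0 with h' | h' | h' <;> [exact hQ0 h'; exact hQ1 h'; exact hQm1 h']
  -- forward membership: r * q^i is some Q^j
  have fwd : ∀ i : Fin n, ∃ j : Fin n, r * q ^ (i : ℕ) = Q ^ (j : ℕ) := by
    intro i
    have hmem : r * q ^ (i : ℕ) ∈ insert (0 : ℝ) (Set.range fun j : Fin n => Q ^ (j : ℕ)) := by
      rw [← h]
      exact Set.mem_image_of_mem _ (Set.mem_insert_iff.mpr (Or.inr ⟨i, rfl⟩))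
    rcases Set.mem_insert_iff.mp hmem with h0 | ⟨j, hj⟩
    · exact absurd h0 (mul_ne_zero hr (pow_ne_zero _ hq0))
    · exact ⟨j, hj.symm⟩
  -- backward membership: Q^j is some r * q^i
  have bwd : ∀ j : Fin n, ∃ i : Fin n, r * q ^ (i : ℕ) = Q ^ (j : ℕ) := by
    intro j
    have hmem : Q ^ (j : ℕ)
        ∈ (fun y => r * y) '' (insert (0 : ℝ) (Set.range fun i : Fin n => q ^ (i : ℕ))) := by
      rw [h]
      exact Set.mem_insert_iff.mpr (Or.inr ⟨j, rfl⟩)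
    rcases hmem with ⟨x, hx, hrx⟩
    rcases Set.mem_insert_iff.mp hx with rfl | ⟨i, rfl⟩
    · exact absurd hrx.symm (by simpa using pow_ne_zero (j : ℕ) hQ0)
    · exact ⟨i, hrx⟩
  have hn1 : 0 < n := by omega
  have hn1' : n - 1 < n := by omega
  obtain ⟨a, ha⟩ := bwd ⟨0, hn1⟩
  obtain ⟨b, hb⟩ := bwd ⟨n - 1, hn1'⟩
  obtain ⟨c, hc⟩ := fwd ⟨n - 1, hn1'⟩
  obtain ⟨d, hd⟩ := fwd ⟨0, hn1⟩
  simp only [Fin.val_mk, pow_zero, mul_one] at ha hb hc hd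
  -- take logs
  have log_mul_pow : ∀ (k : ℕ), Real.log (r * q ^ k) = Real.log r + (k : ℝ) * Real.log q := by
    intro k
    rw [Real.log_mul hr (pow_ne_zero _ hq0), Real.log_pow]
  have la := congrArg Real.log ha
  have lb := congrArg Real.log hb
  have lc := congrArg Real.log hc
  have ld := congrArg Real.log hd
  rw [log_mul_pow, Real.log_one] at la
  rw [log_mul_pow, Real.log_pow] at lb
  rw [log_mul_pow, Real.log_pow] at lc
  have ld' : Real.log r = (d : ℝ) * Real.log Q := by
    rw [← Real.log_pow]; exact ld
  set x := Real.log q with hx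
  set y := Real.log Q with hy
  set m : ℝ := (n : ℝ) - 1 with hm
  have hmpos : 0 < m := by
    have : (2 : ℝ) ≤ (n : ℝ) := by exact_mod_cast hn
    simp only [hm]; linarith
  have hcast : ((n - 1 : ℕ) : ℝ) = m := by
    have : (1 : ℕ) ≤ n := by omega
    push_cast [this]; ring
  rw [hcast] at lb lc
  -- eq1 : (b - a) * x = m * y
  have eq1 : ((b : ℝ) - (a : ℝ)) * x = m * y := by linarith
  -- eq2 : m * x = (c - d) * y
  have eq2 : m * x = ((c : ℝ) - (d : ℝ)) * y := by linarith
  set u : ℝ := (b : ℝ) - (a : ℝ) with hu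
  set v : ℝ := (c : ℝ) - (d : ℝ) with hv
  have hub : |u| ≤ m := by
    have h1 : ((a : ℕ) : ℝ) ≤ (n : ℝ) - 1 := by
      have := a.isLt; have : ((a : ℕ) : ℝ) ≤ (n : ℝ) - 1 := by
        have h2 : (a : ℕ) + 1 ≤ n := a.isLt
        have := (Nat.cast_le (α := ℝ)).mpr h2
        push_cast at this; linarith
      exact this
    have h2 : ((b : ℕ) : ℝ) ≤ (n : ℝ) - 1 := by
      have h2 : (b : ℕ) + 1 ≤ n := b.isLt
      have := (Nat.cast_le (α := ℝ)).mpr h2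
      push_cast at this; linarith
    have h3 : (0 : ℝ) ≤ (a : ℕ) := Nat.cast_nonneg _
    have h4 : (0 : ℝ) ≤ (b : ℕ) := Nat.cast_nonneg _
    rw [abs_le]; constructor <;> simp only [hu, hm] <;> linarith
  have hvb : |v| ≤ m := by
    have h1 : ((c : ℕ) : ℝ) ≤ (n : ℝ) - 1 := by
      have h2 : (c : ℕ) + 1 ≤ n := c.isLt
      have := (Nat.cast_le (α := ℝ)).mpr h2
      push_cast at this; linarith
    have h2 : ((d : ℕ) : ℝ) ≤ (n : ℝ) - 1 := by
      have h2 : (d : ℕ) + 1 ≤ n := d.isLt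
      have := (Nat.cast_le (α := ℝ)).mpr h2
      push_cast at this; linarith
    have h3 : (0 : ℝ) ≤ (c : ℕ) := Nat.cast_nonneg _
    have h4 : (0 : ℝ) ≤ (d : ℕ) := Nat.cast_nonneg _
    rw [abs_le]; constructor <;> simp only [hv, hm] <;> linarith
  -- from eq1 * eq2 : u * v * x * y = m^2 * x * y, so u * v = m^2
  have huv : u * v = m ^ 2 := by
    have hxy : x * y ≠ 0 := mul_ne_zero hlq hlQ
    have : (u * v) * (x * y) = (m ^ 2) * (x * y) := by
      calc (u * v) * (x * y) = (u * x) * (v * y) := by ring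
        _ = (m * y) * (m * x) := by rw [eq1, ← eq2]
        _ = (m ^ 2) * (x * y) := by ring
    exact mul_right_cancel₀ hxy this
  -- hence u^2 = m^2
  have hua : u ^ 2 ≤ m ^ 2 := by
    calc u ^ 2 = |u| ^ 2 := (sq_abs u).symm
      _ ≤ m ^ 2 := pow_le_pow_left₀ (abs_nonneg u) hub 2
  have hva : v ^ 2 ≤ m ^ 2 := by
    calc v ^ 2 = |v| ^ 2 := (sq_abs v).symm
      _ ≤ m ^ 2 := pow_le_pow_left₀ (abs_nonneg v) hvb 2
  have hu2 : u ^ 2 = m ^ 2 := by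
    have hsq : (u * v) ^ 2 = (m ^ 2) ^ 2 := by rw [huv]
    have e : u ^ 2 * v ^ 2 = m ^ 2 * m ^ 2 := by linear_combination hsq
    have h5 : u ^ 2 * v ^ 2 ≤ u ^ 2 * m ^ 2 := mul_le_mul_of_nonneg_left hva (sq_nonneg u)
    have h6 : m ^ 2 * m ^ 2 ≤ u ^ 2 * m ^ 2 := by linarith
    have h7 : m ^ 2 ≤ u ^ 2 := le_of_mul_le_mul_right h6 (by positivity)
    linarith
  have hum : u = m ∨ u = -m := by
    have : (u - m) * (u + m) = 0 := by linear_combination hu2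
    rcases mul_eq_zero.mp this with h' | h'
    · left; linarith
    · right; linarith
  -- conclude |q| = |Q| or relation with inverse
  have habs_log : ∀ s t : ℝ, s ≠ 0 → t ≠ 0 → Real.log s = Real.log t → |s| = |t| := by
    intro s t hs ht hl
    rw [← Real.exp_log (abs_pos.mpr hs), ← Real.exp_log (abs_pos.mpr ht),
      Real.log_abs, Real.log_abs, hl]
  rcases hum with h' | h'
  · -- u = m : x = y, so |q| = |Q|, so Q = -q
    have hxy : x = y := by
      rw [h'] at eq1
      exact mul_left_cancel₀ (ne_of_gt hmpos) eq1
    have : |Q| = |q| := (habs_log q Q hq0 hQ0 hxy).symm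
    rcases abs_eq_abs.mp this with h'' | h''
    · exact absurd h''.symm hqQ
    · exact Or.inl h''
  · -- u = -m : x = -y, so log Q = log q⁻¹
    have hxy : y = -x := by
      rw [h'] at eq1
      have : -m * x = m * y := eq1
      have := mul_left_cancel₀ (ne_of_gt hmpos) (by linarith : m * (-x) = m * y)
      linarith
    have hlog : Real.log Q = Real.log q⁻¹ := by
      rw [Real.log_inv]; exact hxy
    have : |Q| = |q⁻¹| := habs_log Q q⁻¹ hQ0 (inv_ne_zero hq0) hlog
    rcases abs_eq_abs.mp this with h'' | h''
    · exact Or.inr (Or.inl h'')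
    · exact Or.inr (Or.inr h'')
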